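/- arXiv:1607.02634 — 3 statements merged into one kernel-verified Lean document; each statement's English description precedes it below -/
import Mathlib

section
/- Let ε > 0, t > 0 and define I(z) = ∫_{1/√t}^{∞} s^{-2} e^{-z² s²/(2ε)} ds for z ∈ (0,1). Then ∫₀¹ I(z) dz ≤ k √ε for a constant k depending only on t (not on ε). Consequently, the L² norm over (0,1) of the function z ↦ ∫_{1/√t}^{∞} s^{-2} e^{-z²s²/(4ε)} ds, squared via Cauchy–Schwarz, satisfies ∫₀¹ ( ∫_{1/√t}^{∞} s^{-2} e^{-z²s²/(4ε)} ds )² dz ≤ k √t · √ε. -/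
open Real MeasureTheory Set

lemma invsq_integrableOn (m : ℝ) (hm : 0 < m) :
    IntegrableOn (fun s : ℝ => s⁻¹ ^ 2) (Ici m) := by
  have h : IntegrableOn (fun s : ℝ => s ^ (-2 : ℝ)) (Ioi m) :=
    integrableOn_Ioi_rpow_of_lt (by norm_num) hm
  have h2 : IntegrableOn (fun s : ℝ => s⁻¹ ^ 2) (Ioi m) := by
    refine h.congr_fun (fun x hx => ?_) measurableSet_Ioi
    have hx0 : (0:ℝ) < x := hm.trans hx
    beta_reduce
    rw [Real.rpow_neg hx0.le, Real.rpow_two, inv_pow]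
  exact h2.congr_set_ae (Ioi_ae_eq_Ici (μ := volume)).symm

lemma invcube_integrableOn (m : ℝ) (hm : 0 < m) :
    IntegrableOn (fun s : ℝ => s⁻¹ ^ 3) (Ici m) := by
  have h : IntegrableOn (fun s : ℝ => s ^ (-3 : ℝ)) (Ioi m) :=
    integrableOn_Ioi_rpow_of_lt (by norm_num) hm
  have h2 : IntegrableOn (fun s : ℝ => s⁻¹ ^ 3) (Ioi m) := by
    refine h.congr_fun (fun x hx => ?_) measurableSet_Ioi
    have hx0 : (0:ℝ) < x := hm.trans hx
    beta_reduce
    rw [show (-3:ℝ) = -(3:ℕ) by norm_num, Real.rpow_neg hx0.le, Real.rpow_natCast, inv_pow]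
  exact h2.congr_set_ae (Ioi_ae_eq_Ici (μ := volume)).symm

lemma invsq_integral (m : ℝ) (hm : 0 < m) :
    (∫ s in Ici m, s⁻¹ ^ 2) = m⁻¹ := by
  rw [integral_Ici_eq_integral_Ioi]
  have h : (∫ s in Ioi m, s⁻¹ ^ 2) = ∫ s in Ioi m, s ^ (-2 : ℝ) := by
    refine setIntegral_congr_fun measurableSet_Ioi (fun x hx => ?_)
    have hx0 : (0:ℝ) < x := hm.trans hx
    rw [Real.rpow_neg hx0.le, Real.rpow_two, inv_pow]
  rw [h, integral_Ioi_rpow_of_lt (by norm_num) hm]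
  rw [show (-2:ℝ) + 1 = -1 by norm_num, Real.rpow_neg_one]
  ring

lemma invcube_integral (m : ℝ) (hm : 0 < m) :
    (∫ s in Ici m, s⁻¹ ^ 3) = m⁻¹ ^ 2 / 2 := by
  rw [integral_Ici_eq_integral_Ioi]
  have h : (∫ s in Ioi m, s⁻¹ ^ 3) = ∫ s in Ioi m, s ^ (-3 : ℝ) := by
    refine setIntegral_congr_fun measurableSet_Ioi (fun x hx => ?_)
    have hx0 : (0:ℝ) < x := hm.trans hx
    rw [show (-3:ℝ) = -(3:ℕ) by norm_num, Real.rpow_neg hx0.le, Real.rpow_natCast, inv_pow]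
  rw [h, integral_Ioi_rpow_of_lt (by norm_num) hm]
  rw [show (-3:ℝ) + 1 = -(2:ℕ) by norm_num, Real.rpow_neg hm.le, Real.rpow_natCast, inv_pow]
  ring

-- integrability on the product
lemma prod_integrable (m c : ℝ) (hm : 0 < m) (hc : 0 < c) :
    Integrable (Function.uncurry fun z s => s⁻¹ ^ 2 * Real.exp (-(z ^ 2 * s ^ 2) / c))
      ((volume.restrict (Ioc (0:ℝ) 1)).prod (volume.restrict (Ici m))) := by
  have hg : Integrable (fun p : ℝ × ℝ => (1:ℝ) * (p.2)⁻¹ ^ 2)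
      ((volume.restrict (Ioc (0:ℝ) 1)).prod (volume.restrict (Ici m))) :=
    Integrable.mul_prod (integrable_const 1) (invsq_integrableOn m hm)
  have hmeas : AEStronglyMeasurable
      (Function.uncurry fun z s => s⁻¹ ^ 2 * Real.exp (-(z ^ 2 * s ^ 2) / c))
      ((volume.restrict (Ioc (0:ℝ) 1)).prod (volume.restrict (Ici m))) := by
    apply Measurable.aestronglyMeasurable
    fun_prop
  refine hg.mono hmeas (Filter.Eventually.of_forall fun p => ?_)
  simp only [Function.uncurry, one_mul, Real.norm_eq_abs]
  rw [abs_of_nonneg (by positivity), abs_of_nonneg (by positivity)]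
  have : Real.exp (-(p.1 ^ 2 * p.2 ^ 2) / c) ≤ 1 := by
    rw [Real.exp_le_one_iff]
    have : (0:ℝ) ≤ p.1 ^ 2 * p.2 ^ 2 := by positivity
    exact div_nonpos_of_nonpos_of_nonneg (neg_nonpos.mpr this) hc.le
  calc p.2⁻¹ ^ 2 * Real.exp (-(p.1 ^ 2 * p.2 ^ 2) / c) ≤ p.2⁻¹ ^ 2 * 1 := by
        apply mul_le_mul_of_nonneg_left this (by positivity)
    _ = p.2⁻¹ ^ 2 := mul_one _

-- key bound
lemma key_bound (m c : ℝ) (hm : 0 < m) (hc : 0 < c) :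
    (∫ z in (0:ℝ)..1, ∫ s in Ici m, s⁻¹ ^ 2 * Real.exp (-(z ^ 2 * s ^ 2) / c))
      ≤ Real.sqrt (π * c) * (m⁻¹ ^ 2 / 2) := by
  have hint := prod_integrable m c hm hc
  rw [intervalIntegral.integral_of_le zero_le_one]
  rw [show (∫ z in Ioc (0:ℝ) 1, ∫ s in Ici m, s⁻¹ ^ 2 * Real.exp (-(z ^ 2 * s ^ 2) / c))
      = ∫ s in Ici m, ∫ z in Ioc (0:ℝ) 1, s⁻¹ ^ 2 * Real.exp (-(z ^ 2 * s ^ 2) / c) from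
      integral_integral_swap hint]
  have hle : ∀ s ∈ Ici m,
      (∫ z in Ioc (0:ℝ) 1, s⁻¹ ^ 2 * Real.exp (-(z ^ 2 * s ^ 2) / c))
        ≤ Real.sqrt (π * c) * s⁻¹ ^ 3 := by
    intro s hs
    have hs0 : (0:ℝ) < s := hm.trans_le hs
    have hb : (0:ℝ) < s ^ 2 / c := by positivity
    have hexp : ∀ z : ℝ, Real.exp (-(z ^ 2 * s ^ 2) / c) = Real.exp (-(s ^ 2 / c) * z ^ 2) := by
      intro z; congr 1; ring
    rw [MeasureTheory.integral_const_mul]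
    have h1 : (∫ z in Ioc (0:ℝ) 1, Real.exp (-(z ^ 2 * s ^ 2) / c))
        ≤ ∫ z : ℝ, Real.exp (-(s ^ 2 / c) * z ^ 2) := by
      rw [show (fun z => Real.exp (-(z ^ 2 * s ^ 2) / c)) = fun z => Real.exp (-(s ^ 2 / c) * z ^ 2) from
        funext hexp]
      exact setIntegral_le_integral (integrable_exp_neg_mul_sq hb)
        (Filter.Eventually.of_forall fun z => (Real.exp_pos _).le)
    have h2 : (∫ z : ℝ, Real.exp (-(s ^ 2 / c) * z ^ 2)) = Real.sqrt (π * c) / s := by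
      rw [integral_gaussian]
      rw [show π / (s ^ 2 / c) = π * c / s ^ 2 by field_simp]
      rw [Real.sqrt_div (by positivity : (0:ℝ) ≤ π * c), Real.sqrt_sq hs0.le]
    calc s⁻¹ ^ 2 * (∫ z in Ioc (0:ℝ) 1, Real.exp (-(z ^ 2 * s ^ 2) / c))
        ≤ s⁻¹ ^ 2 * (Real.sqrt (π * c) / s) := by
          apply mul_le_mul_of_nonneg_left _ (by positivity)
          rw [← h2]; exact h1
      _ = Real.sqrt (π * c) * s⁻¹ ^ 3 := by field_simp
  calc (∫ s in Ici m, ∫ z in Ioc (0:ℝ) 1, s⁻¹ ^ 2 * Real.exp (-(z ^ 2 * s ^ 2) / c))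
      ≤ ∫ s in Ici m, Real.sqrt (π * c) * s⁻¹ ^ 3 := by
        apply setIntegral_mono_on _ _ measurableSet_Ici hle
        · have := hint.integral_prod_right
          simpa [Function.uncurry, IntegrableOn] using this
        · exact ((invcube_integrableOn m hm).const_mul _)
    _ = Real.sqrt (π * c) * (m⁻¹ ^ 2 / 2) := by
        rw [MeasureTheory.integral_const_mul, invcube_integral m hm]

lemma slice_integrable (m c z : ℝ) (hm : 0 < m) (hc : 0 < c) :
    IntegrableOn (fun s : ℝ => s⁻¹ ^ 2 * Real.exp (-(z ^ 2 * s ^ 2) / c)) (Ici m) := by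
  refine Integrable.mono (invsq_integrableOn m hm) ?_ (Filter.Eventually.of_forall fun s => ?_)
  · exact (Measurable.aestronglyMeasurable (by fun_prop))
  · rw [Real.norm_eq_abs, Real.norm_eq_abs, abs_of_nonneg (by positivity),
      abs_of_nonneg (by positivity)]
    have hexp : Real.exp (-(z ^ 2 * s ^ 2) / c) ≤ 1 := by
      rw [Real.exp_le_one_iff]
      exact div_nonpos_of_nonpos_of_nonneg (neg_nonpos.mpr (by positivity)) hc.le
    calc s⁻¹ ^ 2 * Real.exp (-(z ^ 2 * s ^ 2) / c) ≤ s⁻¹ ^ 2 * 1 :=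
          mul_le_mul_of_nonneg_left hexp (by positivity)
      _ = s⁻¹ ^ 2 := mul_one _

lemma inner_nonneg (m c z : ℝ) :
    0 ≤ ∫ s in Ici m, s⁻¹ ^ 2 * Real.exp (-(z ^ 2 * s ^ 2) / c) :=
  setIntegral_nonneg measurableSet_Ici fun s _ => by positivity

lemma inner_le (m c z : ℝ) (hm : 0 < m) (hc : 0 < c) :
    (∫ s in Ici m, s⁻¹ ^ 2 * Real.exp (-(z ^ 2 * s ^ 2) / c)) ≤ m⁻¹ := by
  have h1 : (∫ s in Ici m, s⁻¹ ^ 2 * Real.exp (-(z ^ 2 * s ^ 2) / c))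
      ≤ ∫ s in Ici m, s⁻¹ ^ 2 := by
    refine setIntegral_mono_on (slice_integrable m c z hm hc) (invsq_integrableOn m hm)
      measurableSet_Ici fun s _ => ?_
    have hexp : Real.exp (-(z ^ 2 * s ^ 2) / c) ≤ 1 := by
      rw [Real.exp_le_one_iff]
      exact div_nonpos_of_nonpos_of_nonneg (neg_nonpos.mpr (by positivity)) hc.le
    calc s⁻¹ ^ 2 * Real.exp (-(z ^ 2 * s ^ 2) / c) ≤ s⁻¹ ^ 2 * 1 :=
          mul_le_mul_of_nonneg_left hexp (by positivity)
      _ = s⁻¹ ^ 2 := mul_one _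
  rw [invsq_integral m hm] at h1
  exact h1

lemma sqrt_aux {c ε : ℝ} (hc : c ≤ 16) (_hc0 : 0 ≤ c) (hε : 0 < ε) :
    Real.sqrt (c * ε) ≤ 4 * Real.sqrt ε := by
  calc Real.sqrt (c * ε) ≤ Real.sqrt (16 * ε) :=
        Real.sqrt_le_sqrt (by nlinarith)
    _ = 4 * Real.sqrt ε := by
        rw [show (16:ℝ) * ε = 4 ^ 2 * ε by norm_num, Real.sqrt_mul (by positivity),
          Real.sqrt_sq (by norm_num)]

theorem tail_integral_L2_bound (t : ℝ) (ht : 0 < t) :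
    ∃ k : ℝ, 0 < k ∧ ∀ ε : ℝ, 0 < ε →
      (∫ z in (0:ℝ)..1, ∫ s in Set.Ici (1 / Real.sqrt t),
          s⁻¹ ^ 2 * Real.exp (-(z ^ 2 * s ^ 2) / (2 * ε))) ≤ k * Real.sqrt ε ∧
      (∫ z in (0:ℝ)..1, (∫ s in Set.Ici (1 / Real.sqrt t),
          s⁻¹ ^ 2 * Real.exp (-(z ^ 2 * s ^ 2) / (4 * ε))) ^ 2)
        ≤ k * Real.sqrt t * Real.sqrt ε := by
  set m : ℝ := 1 / Real.sqrt t with hm_def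
  have hst : 0 < Real.sqrt t := Real.sqrt_pos.mpr ht
  have hm : 0 < m := by positivity
  have hminv : m⁻¹ = Real.sqrt t := by rw [hm_def, one_div, inv_inv]
  have hmsq : m⁻¹ ^ 2 = t := by rw [hminv, Real.sq_sqrt ht.le]
  refine ⟨2 * t, by positivity, fun ε hε => ?_⟩
  have hπ : π ≤ 4 := Real.pi_le_four
  have hπ0 : 0 < π := Real.pi_pos
  constructor
  · calc (∫ z in (0:ℝ)..1, ∫ s in Set.Ici m,
          s⁻¹ ^ 2 * Real.exp (-(z ^ 2 * s ^ 2) / (2 * ε)))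
        ≤ Real.sqrt (π * (2 * ε)) * (m⁻¹ ^ 2 / 2) :=
          key_bound m (2 * ε) hm (by positivity)
      _ ≤ (4 * Real.sqrt ε) * (t / 2) := by
          rw [hmsq]
          refine mul_le_mul_of_nonneg_right ?_ (by positivity)
          rw [show π * (2 * ε) = (2 * π) * ε by ring]
          exact sqrt_aux (by linarith) (by positivity) hε
      _ = 2 * t * Real.sqrt ε := by ring
  · set J : ℝ → ℝ := fun z => ∫ s in Set.Ici m,
        s⁻¹ ^ 2 * Real.exp (-(z ^ 2 * s ^ 2) / (4 * ε)) with hJ_def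
    have hJint : Integrable J (volume.restrict (Ioc (0:ℝ) 1)) := by
      have := (prod_integrable m (4 * ε) hm (by positivity)).integral_prod_left
      simpa [hJ_def, Function.uncurry] using this
    have hJnn : ∀ z, 0 ≤ J z := fun z => inner_nonneg m (4 * ε) z
    have hJle : ∀ z, J z ≤ m⁻¹ := fun z => inner_le m (4 * ε) z hm (by positivity)
    have hJ2int : Integrable (fun z => J z ^ 2) (volume.restrict (Ioc (0:ℝ) 1)) := by
      refine (hJint.const_mul m⁻¹).mono ?_ (Filter.Eventually.of_forall fun z => ?_)
      · simpa [pow_two, Pi.mul_def] using hJint.1.mul hJint.1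
      · rw [Real.norm_eq_abs, Real.norm_eq_abs, abs_of_nonneg (by positivity),
          abs_of_nonneg (by positivity)]
        calc J z ^ 2 = J z * J z := sq (J z) ▸ rfl
          _ ≤ m⁻¹ * J z := mul_le_mul_of_nonneg_right (hJle z) (hJnn z)
    calc (∫ z in (0:ℝ)..1, J z ^ 2) = ∫ z in Ioc (0:ℝ) 1, J z ^ 2 :=
          intervalIntegral.integral_of_le zero_le_one
      _ ≤ ∫ z in Ioc (0:ℝ) 1, m⁻¹ * J z := by
          refine integral_mono hJ2int (hJint.const_mul m⁻¹) fun z => ?_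
          calc J z ^ 2 = J z * J z := by ring
            _ ≤ m⁻¹ * J z := mul_le_mul_of_nonneg_right (hJle z) (hJnn z)
      _ = m⁻¹ * ∫ z in Ioc (0:ℝ) 1, J z := MeasureTheory.integral_const_mul _ _
      _ ≤ m⁻¹ * (Real.sqrt (π * (4 * ε)) * (m⁻¹ ^ 2 / 2)) := by
          refine mul_le_mul_of_nonneg_left ?_ (by positivity)
          rw [← intervalIntegral.integral_of_le zero_le_one]
          exact key_bound m (4 * ε) hm (by positivity)
      _ ≤ Real.sqrt t * ((4 * Real.sqrt ε) * (t / 2)) := by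
          rw [hmsq, hminv]
          refine mul_le_mul_of_nonneg_left ?_ hst.le
          refine mul_le_mul_of_nonneg_right ?_ (by positivity)
          rw [show π * (4 * ε) = (4 * π) * ε by ring]
          exact sqrt_aux (by linarith) (by positivity) hε
      _ = 2 * t * Real.sqrt t * Real.sqrt ε := by ring
end

section
/- Let ε > 0, t > 0, and let g : [0,t] → ℝ be a measurable function with |g(τ)| ≤ M for all τ. Define J(z) = ∫₀ᵗ √ε / √(4π(t−τ)) · 1/(2(t−τ)) · e^{−z²/(4ε(t−τ))} g(τ) dτ for z ∈ (0,1). Then |z · J(z)| ≤ k ε e^{−c z/√(εt)} for constants k, c > 0 depending only on M, and hence ∫₀¹ (z J(z))² dz ≤ k' ε^{5/2}, i.e. ‖z J‖_{L²(0,1)} ≤ k'' ε^{5/4}. -/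
open Real MeasureTheory

lemma sq_mul_exp_neg_le (x : ℝ) (hx : 0 ≤ x) : x ^ 2 * Real.exp (-x) ≤ 4 := by
  have h := Real.add_one_le_exp (x / 2)
  have hsq : (x / 2 + 1) ^ 2 ≤ Real.exp (x / 2) ^ 2 := by
    have h0 : (0:ℝ) ≤ x / 2 + 1 := by linarith
    nlinarith
  have hexp : Real.exp (x / 2) ^ 2 = Real.exp x := by
    rw [sq, ← Real.exp_add]; ring_nf
  have hx2 : x ^ 2 ≤ 4 * Real.exp x := by nlinarith
  have hpos := Real.exp_pos x
  have hinv : Real.exp (-x) = (Real.exp x)⁻¹ := Real.exp_neg x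
  rw [hinv, mul_inv_le_iff₀ hpos]; linarith

lemma exp_neg_div_le (b s : ℝ) (hb : 0 < b) (hs : 0 < s) :
    Real.exp (-(b / s)) ≤ 4 * s ^ 2 / b ^ 2 := by
  have h := sq_mul_exp_neg_le (b / s) (by positivity)
  rw [div_pow, div_mul_eq_mul_div, div_le_iff₀ (by positivity)] at h
  rw [le_div_iff₀ (by positivity)]
  calc Real.exp (-(b / s)) * b ^ 2 = b ^ 2 * Real.exp (-(b / s)) := by ring
    _ ≤ 4 * s ^ 2 := h

lemma hasDerivAt_neg_two_div_sqrt (s : ℝ) (hs : 0 < s) :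
    HasDerivAt (fun x => -2 * (Real.sqrt x)⁻¹) (1 / (s * Real.sqrt s)) s := by
  have h1 : HasDerivAt Real.sqrt (1 / (2 * Real.sqrt s)) s := Real.hasDerivAt_sqrt hs.ne'
  have hsqrt : Real.sqrt s ≠ 0 := (Real.sqrt_pos.mpr hs).ne'
  have h2 := (h1.inv hsqrt).const_mul (-2 : ℝ)
  have heq : -2 * (-(1 / (2 * Real.sqrt s)) / Real.sqrt s ^ 2) = 1 / (s * Real.sqrt s) := by
    rw [Real.sq_sqrt hs.le]
    field_simp
  rwa [heq] at h2

lemma phi_meas (b : ℝ) : Measurable (fun s : ℝ => Real.exp (-(b / s)) / (s * Real.sqrt s)) := by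
  fun_prop

lemma phi_bound (b x : ℝ) (hb : 0 < b) (hx : 0 < x) :
    Real.exp (-(b / x)) / (x * Real.sqrt x) ≤ 4 * Real.sqrt x / b ^ 2 := by
  have hsx : 0 < Real.sqrt x := Real.sqrt_pos.mpr hx
  rw [div_le_iff₀ (by positivity)]
  have h4 : 4 * Real.sqrt x / b ^ 2 * (x * Real.sqrt x) = 4 * x ^ 2 / b ^ 2 := by
    rw [div_mul_eq_mul_div]
    congr 1
    nlinarith [Real.mul_self_sqrt hx.le]
  rw [h4]
  exact exp_neg_div_le b x hb hx

lemma piece1 (b T : ℝ) (hb : 0 < b) (hT : 0 < T) (hTb : T ≤ b) :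
    (∫ s in (0:ℝ)..T, Real.exp (-(b / s)) / (s * Real.sqrt s)) ≤ 4 / Real.sqrt b := by
  have hbound : ∀ x ∈ Set.uIoc (0:ℝ) T,
      ‖Real.exp (-(b / x)) / (x * Real.sqrt x)‖ ≤ 4 * Real.sqrt T / b ^ 2 := by
    intro x hx
    rw [Set.uIoc_of_le hT.le] at hx
    have hx0 : 0 < x := hx.1
    rw [Real.norm_eq_abs, abs_of_nonneg (by positivity)]
    refine (phi_bound b x hb hx0).trans ?_
    gcongr
    exact hx.2
  have h := intervalIntegral.norm_integral_le_of_norm_le_const hbound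
  rw [Real.norm_eq_abs] at h
  have h2 := (le_abs_self _).trans h
  refine h2.trans ?_
  have hsb : 0 < Real.sqrt b := Real.sqrt_pos.mpr hb
  have hsT : 0 ≤ Real.sqrt T := Real.sqrt_nonneg T
  have hTT : Real.sqrt T ≤ Real.sqrt b := Real.sqrt_le_sqrt hTb
  rw [sub_zero, abs_of_nonneg hT.le, div_mul_eq_mul_div, div_le_div_iff₀ (by positivity) hsb]
  have e1 : Real.sqrt T * T * Real.sqrt b ≤ Real.sqrt b * b * Real.sqrt b := by
    have h1 : Real.sqrt T * T ≤ Real.sqrt b * b := mul_le_mul hTT hTb hT.le hsb.le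
    exact mul_le_mul_of_nonneg_right h1 hsb.le
  have e2 : Real.sqrt b * b * Real.sqrt b = b ^ 2 := by
    rw [mul_comm, ← mul_assoc, Real.mul_self_sqrt hb.le]
    exact (sq b).symm
  nlinarith

lemma keyIntegral (b T : ℝ) (hb : 0 < b) (hT : 0 < T) :
    (∫ s in (0:ℝ)..T, Real.exp (-(b / s)) / (s * Real.sqrt s)) ≤ 6 / Real.sqrt b := by
  have hsb : 0 < Real.sqrt b := Real.sqrt_pos.mpr hb
  rcases le_or_gt T b with hTb | hbT
  · refine (piece1 b T hb hT hTb).trans ?_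
    gcongr
    norm_num
  · have II1 : IntervalIntegrable (fun s : ℝ => Real.exp (-(b / s)) / (s * Real.sqrt s))
        volume 0 b := by
      rw [intervalIntegrable_iff_integrableOn_Ioc_of_le hb.le]
      refine Integrable.mono' (integrable_const (4 * Real.sqrt b / b ^ 2))
        (phi_meas b).aestronglyMeasurable ?_
      refine (ae_restrict_iff' measurableSet_Ioc).mpr (Filter.Eventually.of_forall ?_)
      intro x hx
      have hx0 : 0 < x := hx.1
      rw [Real.norm_eq_abs, abs_of_nonneg (by positivity)]
      refine (phi_bound b x hb hx0).trans ?_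
      gcongr
      exact hx.2
    have hcont : ContinuousOn (fun s : ℝ => Real.exp (-(b / s)) / (s * Real.sqrt s))
        (Set.Icc b T) := by
      apply ContinuousOn.div
      · exact Real.continuous_exp.comp_continuousOn
          ((continuousOn_const.div continuousOn_id (fun x hx => by
            have : 0 < x := lt_of_lt_of_le hb hx.1; exact this.ne')).neg)
      · exact continuousOn_id.mul Real.continuous_sqrt.continuousOn
      · intro x hx
        have : 0 < x := lt_of_lt_of_le hb hx.1
        positivity
    have hcont2 : ContinuousOn (fun s : ℝ => 1 / (s * Real.sqrt s)) (Set.Icc b T) := by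
      apply ContinuousOn.div continuousOn_const
        (continuousOn_id.mul Real.continuous_sqrt.continuousOn)
      intro x hx
      have : 0 < x := lt_of_lt_of_le hb hx.1
      exact mul_ne_zero this.ne' (Real.sqrt_pos.mpr this).ne'
    have II2 : IntervalIntegrable (fun s : ℝ => Real.exp (-(b / s)) / (s * Real.sqrt s))
        volume b T := (hcont.mono (by rw [Set.uIcc_of_le hbT.le])).intervalIntegrable
    have II2' : IntervalIntegrable (fun s : ℝ => 1 / (s * Real.sqrt s))
        volume b T := (hcont2.mono (by rw [Set.uIcc_of_le hbT.le])).intervalIntegrable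
    rw [← intervalIntegral.integral_add_adjacent_intervals II1 II2]
    have p1 := piece1 b b hb hb le_rfl
    have p2 : (∫ s in b..T, Real.exp (-(b / s)) / (s * Real.sqrt s))
        ≤ ∫ s in b..T, 1 / (s * Real.sqrt s) := by
      apply intervalIntegral.integral_mono_on hbT.le II2 II2'
      intro x hx
      have hx0 : 0 < x := lt_of_lt_of_le hb hx.1
      have hd : 0 < x * Real.sqrt x := by positivity
      have he : Real.exp (-(b / x)) ≤ 1 := by
        have h0 : 0 ≤ b / x := div_nonneg hb.le hx0.le
        exact Real.exp_le_one_iff.mpr (by linarith)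
      exact div_le_div_of_nonneg_right he hd.le
    have p3 : (∫ s in b..T, 1 / (s * Real.sqrt s))
        = -2 * (Real.sqrt T)⁻¹ - -2 * (Real.sqrt b)⁻¹ := by
      apply intervalIntegral.integral_eq_sub_of_hasDerivAt
      · intro x hx
        rw [Set.uIcc_of_le hbT.le] at hx
        exact hasDerivAt_neg_two_div_sqrt x (lt_of_lt_of_le hb hx.1)
      · exact II2'
    have hsT : 0 < Real.sqrt T := Real.sqrt_pos.mpr (hb.trans hbT)
    have hfin : -2 * (Real.sqrt T)⁻¹ - -2 * (Real.sqrt b)⁻¹ ≤ 2 / Real.sqrt b := by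
      rw [div_eq_mul_inv]
      have h1 : 0 ≤ (Real.sqrt T)⁻¹ := by positivity
      linarith
    have h4 : 4 / Real.sqrt b + 2 / Real.sqrt b = 6 / Real.sqrt b := by ring
    linarith [p2.trans (p3 ▸ hfin)]

set_option maxHeartbeats 1000000 in
theorem zJ1_estimate (M t : ℝ) (hM : 0 < M) (ht : 0 < t) :
    ∃ k c k' : ℝ, 0 < k ∧ 0 < c ∧ 0 < k' ∧
      ∀ ε : ℝ, 0 < ε → ∀ g : ℝ → ℝ, Measurable g → (∀ τ ∈ Set.Icc (0:ℝ) t, |g τ| ≤ M) →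
        (∀ z ∈ Set.Ioo (0:ℝ) 1,
          |z * ∫ τ in (0:ℝ)..t, Real.sqrt ε / Real.sqrt (4 * π * (t - τ)) *
              (1 / (2 * (t - τ))) * Real.exp (-z ^ 2 / (4 * ε * (t - τ))) * g τ|
            ≤ k * ε * Real.exp (-(c * z) / Real.sqrt (ε * t))) ∧
        (∫ z in (0:ℝ)..1, (z * ∫ τ in (0:ℝ)..t, Real.sqrt ε / Real.sqrt (4 * π * (t - τ)) *
              (1 / (2 * (t - τ))) * Real.exp (-z ^ 2 / (4 * ε * (t - τ))) * g τ) ^ 2)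
            ≤ k' * ε ^ ((5:ℝ)/2) := by
  have hπ : (0:ℝ) < Real.sqrt π := Real.sqrt_pos.mpr Real.pi_pos
  refine ⟨3 * M * Real.exp 2, 1, (3 * M * Real.exp 2) ^ 2 * Real.sqrt t,
    by positivity, one_pos, by positivity, ?_⟩
  intro ε hε g hg hgM
  have hεt : 0 < ε * t := mul_pos hε ht
  have hs0 : 0 < Real.sqrt (ε * t) := Real.sqrt_pos.mpr hεt
  have hs0sq : Real.sqrt (ε * t) * Real.sqrt (ε * t) = ε * t := Real.mul_self_sqrt hεt.le
  have key : ∀ z ∈ Set.Ioo (0:ℝ) 1,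
      |z * ∫ τ in (0:ℝ)..t, Real.sqrt ε / Real.sqrt (4 * π * (t - τ)) *
          (1 / (2 * (t - τ))) * Real.exp (-z ^ 2 / (4 * ε * (t - τ))) * g τ|
        ≤ 3 * M * Real.exp 2 * ε * Real.exp (-((1:ℝ) * z) / Real.sqrt (ε * t)) := by
    intro z hz
    obtain ⟨hz0, hz1⟩ := hz
    set b := z ^ 2 / (8 * ε) with hbdef
    have hb : 0 < b := by positivity
    set C := M * Real.sqrt ε / (4 * Real.sqrt π) * Real.exp (-(z ^ 2 / (8 * ε * t)))
      with hCdef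
    have hC : 0 < C := by positivity
    have hsqrt4 : Real.sqrt 4 = 2 := by
      rw [show (4:ℝ) = 2 ^ 2 by norm_num, Real.sqrt_sq (by norm_num)]
    -- pointwise bound on the inner integrand
    have hFH : ∀ τ ∈ Set.uIoc (0:ℝ) t,
        ‖Real.sqrt ε / Real.sqrt (4 * π * (t - τ)) * (1 / (2 * (t - τ))) *
          Real.exp (-z ^ 2 / (4 * ε * (t - τ))) * g τ‖
        ≤ C * (Real.exp (-(b / (t - τ))) / ((t - τ) * Real.sqrt (t - τ))) := by
      intro τ hτ
      rw [Set.uIoc_of_le ht.le] at hτ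
      rcases eq_or_lt_of_le hτ.2 with heq | hlt
      · subst heq
        simp
      · have hτ0 : 0 < τ := hτ.1
        have hs : 0 < t - τ := by linarith
        have hss : 0 < Real.sqrt (t - τ) := Real.sqrt_pos.mpr hs
        have hgτ : |g τ| ≤ M := hgM τ ⟨hτ.1.le, hτ.2⟩
        have hsq4 : Real.sqrt (4 * π * (t - τ)) = 2 * Real.sqrt π * Real.sqrt (t - τ) := by
          rw [Real.sqrt_mul (by positivity) (t - τ), Real.sqrt_mul (by norm_num) π, hsqrt4]
        have hApos : 0 ≤ Real.sqrt ε / Real.sqrt (4 * π * (t - τ)) * (1 / (2 * (t - τ))) *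
            Real.exp (-z ^ 2 / (4 * ε * (t - τ))) := by positivity
        have hexp2 : Real.exp (-z ^ 2 / (4 * ε * (t - τ)))
            ≤ Real.exp (-(z ^ 2 / (8 * ε * t))) * Real.exp (-(b / (t - τ))) := by
          rw [← Real.exp_add]
          apply Real.exp_le_exp.mpr
          have hmon : z ^ 2 / (8 * ε * t) ≤ z ^ 2 / (8 * ε * (t - τ)) := by
            gcongr
            linarith
          have heqq : -z ^ 2 / (4 * ε * (t - τ))
              = -(z ^ 2 / (8 * ε * (t - τ))) + -(b / (t - τ)) := by
            rw [hbdef]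
            field_simp
            ring
          rw [heqq]
          have hb2 : -(z ^ 2 / (8 * ε * (t - τ))) ≤ -(z ^ 2 / (8 * ε * t)) := by linarith
          linarith
        calc ‖Real.sqrt ε / Real.sqrt (4 * π * (t - τ)) * (1 / (2 * (t - τ))) *
              Real.exp (-z ^ 2 / (4 * ε * (t - τ))) * g τ‖
            = (Real.sqrt ε / Real.sqrt (4 * π * (t - τ)) * (1 / (2 * (t - τ))) *
              Real.exp (-z ^ 2 / (4 * ε * (t - τ)))) * |g τ| := by
              rw [Real.norm_eq_abs, abs_mul, abs_of_nonneg hApos]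
          _ ≤ (Real.sqrt ε / Real.sqrt (4 * π * (t - τ)) * (1 / (2 * (t - τ))) *
              Real.exp (-z ^ 2 / (4 * ε * (t - τ)))) * M :=
              mul_le_mul_of_nonneg_left hgτ hApos
          _ = (M * Real.sqrt ε / (4 * Real.sqrt π)) *
              Real.exp (-z ^ 2 / (4 * ε * (t - τ))) / ((t - τ) * Real.sqrt (t - τ)) := by
              rw [hsq4]
              field_simp
              ring
          _ ≤ (M * Real.sqrt ε / (4 * Real.sqrt π)) *
              (Real.exp (-(z ^ 2 / (8 * ε * t))) * Real.exp (-(b / (t - τ)))) /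
              ((t - τ) * Real.sqrt (t - τ)) := by gcongr
          _ = C * (Real.exp (-(b / (t - τ))) / ((t - τ) * Real.sqrt (t - τ))) := by
              rw [hCdef]; ring
    -- integrability of the majorant
    have hint0 : IntervalIntegrable
        (fun τ => Real.exp (-(b / (t - τ))) / ((t - τ) * Real.sqrt (t - τ))) volume 0 t := by
      rw [intervalIntegrable_iff_integrableOn_Ioc_of_le ht.le]
      refine Integrable.mono' (integrable_const (4 * Real.sqrt t / b ^ 2))
        (((phi_meas b).comp (measurable_const.sub measurable_id)).aestronglyMeasurable) ?_
      refine (ae_restrict_iff' measurableSet_Ioc).mpr (Filter.Eventually.of_forall ?_)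
      intro τ hτ
      rcases eq_or_lt_of_le hτ.2 with heq | hlt
      · subst heq
        simp
        positivity
      · have hτ0 : 0 < τ := hτ.1
        have hs : 0 < t - τ := by linarith
        rw [Real.norm_eq_abs, abs_of_nonneg (by positivity)]
        refine (phi_bound b (t - τ) hb hs).trans ?_
        gcongr
        first
        | exact Real.sqrt_le_sqrt (by linarith)
        | linarith
    have hHint : IntervalIntegrable
        (fun τ => C * (Real.exp (-(b / (t - τ))) / ((t - τ) * Real.sqrt (t - τ))))
        volume 0 t := hint0.const_mul C
    -- the main estimate
    have h1 : ‖∫ τ in (0:ℝ)..t, Real.sqrt ε / Real.sqrt (4 * π * (t - τ)) *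
          (1 / (2 * (t - τ))) * Real.exp (-z ^ 2 / (4 * ε * (t - τ))) * g τ‖
        ≤ |∫ τ in (0:ℝ)..t,
            C * (Real.exp (-(b / (t - τ))) / ((t - τ) * Real.sqrt (t - τ)))| :=
      intervalIntegral.norm_integral_le_abs_of_norm_le
        ((ae_restrict_iff' measurableSet_uIoc).mpr (Filter.Eventually.of_forall hFH)) hHint
    have h2 : (∫ τ in (0:ℝ)..t,
          C * (Real.exp (-(b / (t - τ))) / ((t - τ) * Real.sqrt (t - τ))))
        = C * ∫ s in (0:ℝ)..t, Real.exp (-(b / s)) / (s * Real.sqrt s) := by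
      rw [intervalIntegral.integral_const_mul]
      congr 1
      rw [intervalIntegral.integral_comp_sub_left
        (fun s => Real.exp (-(b / s)) / (s * Real.sqrt s)) t]
      norm_num
    have hKnn : 0 ≤ ∫ s in (0:ℝ)..t, Real.exp (-(b / s)) / (s * Real.sqrt s) := by
      apply intervalIntegral.integral_nonneg ht.le
      intro s hs
      have : 0 ≤ s * Real.sqrt s := mul_nonneg hs.1 (Real.sqrt_nonneg s)
      positivity
    have h3 := keyIntegral b t hb ht
    have h4 : |∫ τ in (0:ℝ)..t,
          C * (Real.exp (-(b / (t - τ))) / ((t - τ) * Real.sqrt (t - τ)))|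
        ≤ C * (6 / Real.sqrt b) := by
      rw [h2, abs_of_nonneg (mul_nonneg hC.le hKnn)]
      exact mul_le_mul_of_nonneg_left h3 hC.le
    -- numeric conclusion
    have hsb : Real.sqrt b = z / (Real.sqrt 8 * Real.sqrt ε) := by
      rw [hbdef, Real.sqrt_div (by positivity) (8 * ε), Real.sqrt_sq hz0.le,
        Real.sqrt_mul (by norm_num) ε]
    have h8 : (0:ℝ) < Real.sqrt 8 := Real.sqrt_pos.mpr (by norm_num)
    have hsε : (0:ℝ) < Real.sqrt ε := Real.sqrt_pos.mpr hε
    have e0 : z * (C * (6 / Real.sqrt b)) = 6 * C * (Real.sqrt 8 * Real.sqrt ε) := by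
      rw [hsb]
      field_simp
    have h82 : Real.sqrt 8 ≤ 2 * Real.sqrt π := by
      have h1 : Real.sqrt 8 ≤ Real.sqrt (4 * π) :=
        Real.sqrt_le_sqrt (by nlinarith [Real.pi_gt_three])
      rwa [Real.sqrt_mul (by norm_num) π, hsqrt4] at h1
    have hE : Real.exp (-(z ^ 2 / (8 * ε * t)))
        ≤ Real.exp 2 * Real.exp (-((1:ℝ) * z) / Real.sqrt (ε * t)) := by
      rw [← Real.exp_add]
      apply Real.exp_le_exp.mpr
      have hw2 : (z / Real.sqrt (ε * t)) ^ 2 = z ^ 2 / (ε * t) := by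
        rw [div_pow]
        congr 1
        rw [sq, hs0sq]
      have harg : z ^ 2 / (8 * ε * t) = (z / Real.sqrt (ε * t)) ^ 2 / 8 := by
        rw [hw2]
        field_simp
      rw [harg, one_mul, neg_div]
      set w := z / Real.sqrt (ε * t)
      nlinarith [sq_nonneg (w - 4)]
    have hfinal : 6 * C * (Real.sqrt 8 * Real.sqrt ε)
        ≤ 3 * M * Real.exp 2 * ε * Real.exp (-((1:ℝ) * z) / Real.sqrt (ε * t)) := by
      rw [hCdef]
      have expand : 6 * (M * Real.sqrt ε / (4 * Real.sqrt π) *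
            Real.exp (-(z ^ 2 / (8 * ε * t)))) * (Real.sqrt 8 * Real.sqrt ε)
          = 6 * M * Real.sqrt ε * Real.exp (-(z ^ 2 / (8 * ε * t))) *
            (Real.sqrt 8 * Real.sqrt ε) / (4 * Real.sqrt π) := by
        ring
      rw [expand, div_le_iff₀ (by positivity)]
      have step : 6 * M * Real.sqrt ε * Real.exp (-(z ^ 2 / (8 * ε * t))) *
            (Real.sqrt 8 * Real.sqrt ε)
          ≤ 6 * M * Real.sqrt ε *
            (Real.exp 2 * Real.exp (-((1:ℝ) * z) / Real.sqrt (ε * t))) *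
            (2 * Real.sqrt π * Real.sqrt ε) := by
        gcongr
      have hεε : Real.sqrt ε * Real.sqrt ε = ε := Real.mul_self_sqrt hε.le
      refine step.trans (le_of_eq ?_)
      linear_combination (12 * M * Real.exp 2 *
        Real.exp (-((1:ℝ) * z) / Real.sqrt (ε * t)) * Real.sqrt π) * hεε
    calc |z * ∫ τ in (0:ℝ)..t, Real.sqrt ε / Real.sqrt (4 * π * (t - τ)) *
            (1 / (2 * (t - τ))) * Real.exp (-z ^ 2 / (4 * ε * (t - τ))) * g τ|
        = z * ‖∫ τ in (0:ℝ)..t, Real.sqrt ε / Real.sqrt (4 * π * (t - τ)) *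
            (1 / (2 * (t - τ))) * Real.exp (-z ^ 2 / (4 * ε * (t - τ))) * g τ‖ := by
          rw [Real.norm_eq_abs, abs_mul, abs_of_pos hz0]
      _ ≤ z * (C * (6 / Real.sqrt b)) := by
          apply mul_le_mul_of_nonneg_left (h1.trans h4) hz0.le
      _ = 6 * C * (Real.sqrt 8 * Real.sqrt ε) := e0
      _ ≤ 3 * M * Real.exp 2 * ε * Real.exp (-((1:ℝ) * z) / Real.sqrt (ε * t)) := hfinal
  refine ⟨key, ?_⟩
  -- the L² estimate
  have hIooIoc : volume.restrict (Set.Ioc (0:ℝ) 1) = volume.restrict (Set.Ioo (0:ℝ) 1) :=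
    (Measure.restrict_congr_set Ioo_ae_eq_Ioc).symm
  have hcontmaj : Continuous (fun z : ℝ =>
      (3 * M * Real.exp 2 * ε) ^ 2 * Real.exp (-2 / Real.sqrt (ε * t) * z)) :=
    continuous_const.mul (Real.continuous_exp.comp (continuous_const.mul continuous_id))
  have hmajint : IntegrableOn (fun z : ℝ =>
      (3 * M * Real.exp 2 * ε) ^ 2 * Real.exp (-2 / Real.sqrt (ε * t) * z))
      (Set.Ioc (0:ℝ) 1) volume := hcontmaj.integrableOn_Ioc
  rw [intervalIntegral.integral_of_le (by norm_num : (0:ℝ) ≤ 1)]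
  have hmono : (∫ z in Set.Ioc (0:ℝ) 1,
        (z * ∫ τ in (0:ℝ)..t, Real.sqrt ε / Real.sqrt (4 * π * (t - τ)) *
          (1 / (2 * (t - τ))) * Real.exp (-z ^ 2 / (4 * ε * (t - τ))) * g τ) ^ 2)
      ≤ ∫ z in Set.Ioc (0:ℝ) 1,
        (3 * M * Real.exp 2 * ε) ^ 2 * Real.exp (-2 / Real.sqrt (ε * t) * z) := by
    apply integral_mono_of_nonneg
    · exact Filter.Eventually.of_forall fun z => sq_nonneg _
    · exact hmajint
    · rw [hIooIoc]
      refine (ae_restrict_iff' measurableSet_Ioo).mpr (Filter.Eventually.of_forall ?_)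
      intro z hz
      dsimp only
      have h := key z hz
      have habs : (z * ∫ τ in (0:ℝ)..t, Real.sqrt ε / Real.sqrt (4 * π * (t - τ)) *
          (1 / (2 * (t - τ))) * Real.exp (-z ^ 2 / (4 * ε * (t - τ))) * g τ) ^ 2
          = |z * ∫ τ in (0:ℝ)..t, Real.sqrt ε / Real.sqrt (4 * π * (t - τ)) *
          (1 / (2 * (t - τ))) * Real.exp (-z ^ 2 / (4 * ε * (t - τ))) * g τ| ^ 2 :=
        (sq_abs _).symm
      rw [habs]
      calc |z * ∫ τ in (0:ℝ)..t, Real.sqrt ε / Real.sqrt (4 * π * (t - τ)) *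
            (1 / (2 * (t - τ))) * Real.exp (-z ^ 2 / (4 * ε * (t - τ))) * g τ| ^ 2
          ≤ (3 * M * Real.exp 2 * ε *
              Real.exp (-((1:ℝ) * z) / Real.sqrt (ε * t))) ^ 2 := by
            apply pow_le_pow_left₀ (abs_nonneg _) h
        _ = (3 * M * Real.exp 2 * ε) ^ 2 * Real.exp (-2 / Real.sqrt (ε * t) * z) := by
            rw [mul_pow, sq (Real.exp _), ← Real.exp_add]
            congr 1
            field_simp
            ring
  refine hmono.trans ?_
  have hFTC : (∫ z in (0:ℝ)..1, Real.exp (-2 / Real.sqrt (ε * t) * z))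
      = -(Real.sqrt (ε * t) / 2) * Real.exp (-2 / Real.sqrt (ε * t) * 1)
        - -(Real.sqrt (ε * t) / 2) * Real.exp (-2 / Real.sqrt (ε * t) * 0) := by
    apply intervalIntegral.integral_eq_sub_of_hasDerivAt
      (f := fun x => -(Real.sqrt (ε * t) / 2) * Real.exp (-2 / Real.sqrt (ε * t) * x))
    · intro x _
      have hd : HasDerivAt (fun y : ℝ => -2 / Real.sqrt (ε * t) * y)
          (-2 / Real.sqrt (ε * t)) x := by
        simpa using (hasDerivAt_id x).const_mul (-2 / Real.sqrt (ε * t))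
      have hd2 := (hd.exp).const_mul (-(Real.sqrt (ε * t) / 2))
      have heq : -(Real.sqrt (ε * t) / 2) *
          (Real.exp (-2 / Real.sqrt (ε * t) * x) * (-2 / Real.sqrt (ε * t)))
          = Real.exp (-2 / Real.sqrt (ε * t) * x) := by
        field_simp
      rwa [heq] at hd2
    · exact (Real.continuous_exp.comp
        ((continuous_const.mul continuous_id))).intervalIntegrable 0 1
  have hIeq : (∫ z in Set.Ioc (0:ℝ) 1,
        (3 * M * Real.exp 2 * ε) ^ 2 * Real.exp (-2 / Real.sqrt (ε * t) * z))
      = (3 * M * Real.exp 2 * ε) ^ 2 *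
        ∫ z in (0:ℝ)..1, Real.exp (-2 / Real.sqrt (ε * t) * z) := by
    rw [← intervalIntegral.integral_of_le (by norm_num : (0:ℝ) ≤ 1),
      intervalIntegral.integral_const_mul]
  rw [hIeq, hFTC]
  have hexp1 : 0 < Real.exp (-2 / Real.sqrt (ε * t) * 1) := Real.exp_pos _
  have hexp0 : Real.exp (-2 / Real.sqrt (ε * t) * 0) = 1 := by norm_num
  rw [hexp0]
  have hbound2 : -(Real.sqrt (ε * t) / 2) * Real.exp (-2 / Real.sqrt (ε * t) * 1)
      - -(Real.sqrt (ε * t) / 2) * 1 ≤ Real.sqrt (ε * t) / 2 := by nlinarith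
  have hrw : ε ^ ((5:ℝ)/2) = ε ^ 2 * Real.sqrt ε := by
    rw [show (5:ℝ)/2 = 2 + 1/2 by norm_num, Real.rpow_add hε, Real.sqrt_eq_rpow]
    congr 1
    rw [show ((2:ℝ)) = ((2:ℕ):ℝ) by norm_num, Real.rpow_natCast]
  have hst : Real.sqrt (ε * t) = Real.sqrt ε * Real.sqrt t := Real.sqrt_mul hε.le t
  have hfin2 : (3 * M * Real.exp 2 * ε) ^ 2 * (Real.sqrt (ε * t) / 2)
      ≤ (3 * M * Real.exp 2) ^ 2 * Real.sqrt t * ε ^ ((5:ℝ)/2) := by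
    rw [hrw, hst]
    have hnn : (0:ℝ) ≤ (3 * M * Real.exp 2) ^ 2 * Real.sqrt t * (ε ^ 2 * Real.sqrt ε) := by
      positivity
    have heq : (3 * M * Real.exp 2 * ε) ^ 2 * (Real.sqrt ε * Real.sqrt t / 2)
        = ((3 * M * Real.exp 2) ^ 2 * Real.sqrt t * (ε ^ 2 * Real.sqrt ε)) / 2 := by ring
    rw [heq]
    linarith
  calc (3 * M * Real.exp 2 * ε) ^ 2 *
        (-(Real.sqrt (ε * t) / 2) * Real.exp (-2 / Real.sqrt (ε * t) * 1)
          - -(Real.sqrt (ε * t) / 2) * 1)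
      ≤ (3 * M * Real.exp 2 * ε) ^ 2 * (Real.sqrt (ε * t) / 2) := by
        apply mul_le_mul_of_nonneg_left hbound2 (by positivity)
    _ ≤ (3 * M * Real.exp 2) ^ 2 * Real.sqrt t * ε ^ ((5:ℝ)/2) := hfin2
end

section
/- Let ε > 0, t > 0, and M > 0. Define I₂(z) = ∫_{1/√t}^{∞} (√ε/(√(4π) s²)) e^{−z²s²/(4ε)} h(s) ds with |h(s)| ≤ M. Then, by Cauchy–Schwarz, ‖I₂‖²_{L²(0,1)} ≤ k ε √t ∫_{1/√t}^∞ s^{−2} ∫₀¹ e^{−z²s²/(2ε)} dz ds ≤ k' ε^{3/2}, so ‖I₂‖_{L²(0,1)} ≤ K ε^{3/4}. -/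
open Real MeasureTheory



lemma my_cs {α : Type*} [MeasurableSpace α] {μ : Measure α} {f g : α → ℝ}
    (hf : 0 ≤ᵐ[μ] f) (hg : 0 ≤ᵐ[μ] g)
    (hfm : AEStronglyMeasurable f μ) (hgm : AEStronglyMeasurable g μ)
    (hf2 : Integrable (fun x => f x ^ 2) μ) (hg2 : Integrable (fun x => g x ^ 2) μ) :
    (∫ x, f x * g x ∂μ) ^ 2 ≤ (∫ x, f x ^ 2 ∂μ) * (∫ x, g x ^ 2 ∂μ) := by
  have hpq : Real.HolderConjugate 2 2 := Real.HolderConjugate.two_two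
  have hfL : MemLp f 2 μ := (memLp_two_iff_integrable_sq hfm).2 hf2
  have hgL : MemLp g 2 μ := (memLp_two_iff_integrable_sq hgm).2 hg2
  have key := MeasureTheory.integral_mul_le_Lp_mul_Lq_of_nonneg hpq hf hg
      (by simpa using hfL) (by simpa using hgL)
  simp only [Real.rpow_two] at key
  have h1 : 0 ≤ ∫ x, f x * g x ∂μ :=
    integral_nonneg_of_ae <| by filter_upwards [hf, hg] with x h1 h2; exact mul_nonneg h1 h2
  have h2 : 0 ≤ ∫ x, f x ^ 2 ∂μ := integral_nonneg fun x => sq_nonneg _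
  have h3 : 0 ≤ ∫ x, g x ^ 2 ∂μ := integral_nonneg fun x => sq_nonneg _
  calc (∫ x, f x * g x ∂μ) ^ 2
      ≤ ((∫ x, f x ^ 2 ∂μ) ^ ((1:ℝ)/2) * (∫ x, g x ^ 2 ∂μ) ^ ((1:ℝ)/2)) ^ 2 :=
        pow_le_pow_left₀ h1 key 2
    _ = (∫ x, f x ^ 2 ∂μ) * (∫ x, g x ^ 2 ∂μ) := by
        rw [mul_pow, ← Real.rpow_natCast ((∫ x, f x ^ 2 ∂μ) ^ ((1:ℝ)/2)) 2,
          ← Real.rpow_natCast ((∫ x, g x ^ 2 ∂μ) ^ ((1:ℝ)/2)) 2,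
          ← Real.rpow_mul h2, ← Real.rpow_mul h3]
        norm_num

lemma inner_z_bound {ε s : ℝ} (hε : 0 < ε) (hs : 0 < s) :
    ∫ z in (0:ℝ)..1, Real.exp (-(z ^ 2 * s ^ 2) / (2 * ε)) ≤ Real.sqrt (2 * π * ε) / (2 * s) := by
  have hb : 0 < s ^ 2 / (2 * ε) := by positivity
  have hfun : ∀ z : ℝ, -(z ^ 2 * s ^ 2) / (2 * ε) = -(s ^ 2 / (2 * ε)) * z ^ 2 := fun z => by ring
  rw [intervalIntegral.integral_of_le zero_le_one]
  calc ∫ z in Set.Ioc (0:ℝ) 1, Real.exp (-(z ^ 2 * s ^ 2) / (2 * ε))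
      ≤ ∫ z in Set.Ioi (0:ℝ), Real.exp (-(s ^ 2 / (2 * ε)) * z ^ 2) := by
        simp_rw [hfun]
        refine setIntegral_mono_set ((integrable_exp_neg_mul_sq hb).integrableOn)
          (Filter.Eventually.of_forall fun z => (Real.exp_nonneg _))
          (Filter.Eventually.of_forall ?_)
        intro z hz; exact Set.Ioc_subset_Ioi_self hz
    _ = Real.sqrt (π / (s ^ 2 / (2 * ε))) / 2 := integral_gaussian_Ioi _
    _ = Real.sqrt (2 * π * ε) / (2 * s) := by
        rw [show π / (s ^ 2 / (2 * ε)) = (2 * π * ε) / s ^ 2 by field_simp,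
          Real.sqrt_div (by positivity), Real.sqrt_sq hs.le]
        ring



lemma rpow_neg_two' {s : ℝ} (hs : 0 < s) : s ^ (-2:ℝ) = s⁻¹ ^ 2 := by
  rw [show (-2:ℝ) = -(2:ℕ) by norm_num, Real.rpow_neg hs.le, Real.rpow_natCast, inv_pow]

lemma rpow_neg_three' {s : ℝ} (hs : 0 < s) : s ^ (-3:ℝ) = s⁻¹ ^ 3 := by
  rw [show (-3:ℝ) = -(3:ℕ) by norm_num, Real.rpow_neg hs.le, Real.rpow_natCast, inv_pow]

lemma int_inv_sq {a : ℝ} (ha : 0 < a) : IntegrableOn (fun s : ℝ => s⁻¹ ^ 2) (Set.Ici a) := by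
  rw [integrableOn_Ici_iff_integrableOn_Ioi]
  exact (integrableOn_Ioi_rpow_of_lt (by norm_num : (-2:ℝ) < -1) ha).congr_fun
    (fun s hs => rpow_neg_two' (ha.trans hs)) measurableSet_Ioi

lemma int_inv_cube {a : ℝ} (ha : 0 < a) : IntegrableOn (fun s : ℝ => s⁻¹ ^ 3) (Set.Ici a) := by
  rw [integrableOn_Ici_iff_integrableOn_Ioi]
  exact (integrableOn_Ioi_rpow_of_lt (by norm_num : (-3:ℝ) < -1) ha).congr_fun
    (fun s hs => rpow_neg_three' (ha.trans hs)) measurableSet_Ioi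

lemma val_inv_sq {a : ℝ} (ha : 0 < a) : ∫ s in Set.Ici a, s⁻¹ ^ 2 = a⁻¹ := by
  rw [MeasureTheory.integral_Ici_eq_integral_Ioi,
    ← setIntegral_congr_fun measurableSet_Ioi (fun s hs => rpow_neg_two' (ha.trans hs)),
    integral_Ioi_rpow_of_lt (by norm_num : (-2:ℝ) < -1) ha]
  norm_num [Real.rpow_neg_one]

lemma val_inv_cube {a : ℝ} (ha : 0 < a) : ∫ s in Set.Ici a, s⁻¹ ^ 3 = a⁻¹ ^ 2 / 2 := by
  rw [MeasureTheory.integral_Ici_eq_integral_Ioi,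
    ← setIntegral_congr_fun measurableSet_Ioi (fun s hs => rpow_neg_three' (ha.trans hs)),
    integral_Ioi_rpow_of_lt (by norm_num : (-3:ℝ) < -1) ha,
    show (-3:ℝ) + 1 = -2 by norm_num, rpow_neg_two' ha]
  ring
lemma exp_term_le_one {z s d : ℝ} (hd : 0 < d) : Real.exp (-(z ^ 2 * s ^ 2) / d) ≤ 1 :=
  Real.exp_le_one_iff.2 (div_nonpos_of_nonpos_of_nonneg (neg_nonpos.2 (by positivity)) hd.le)

lemma int_inv_sq_exp {a ε z : ℝ} (ha : 0 < a) (hε : 0 < ε) (d : ℝ) (hd : 0 < d) :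
    IntegrableOn (fun s : ℝ => s⁻¹ ^ 2 * Real.exp (-(z ^ 2 * s ^ 2) / d)) (Set.Ici a) := by
  refine (int_inv_sq ha).mono' ?_ (Filter.Eventually.of_forall fun s => ?_)
  · exact ((measurable_inv.pow_const 2).mul (by measurability)).aestronglyMeasurable
  · rw [Real.norm_eq_abs, abs_mul, abs_of_nonneg (Real.exp_nonneg _), abs_of_nonneg (by positivity : (0:ℝ) ≤ s⁻¹ ^ 2)]
    calc s⁻¹ ^ 2 * Real.exp (-(z ^ 2 * s ^ 2) / d) ≤ s⁻¹ ^ 2 * 1 :=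
          mul_le_mul_of_nonneg_left (exp_term_le_one hd) (by positivity)
      _ = s⁻¹ ^ 2 := mul_one _

lemma key_pointwise {a ε M : ℝ} (ha : 0 < a) (hε : 0 < ε) (hM : 0 < M)
    {h : ℝ → ℝ} (hmeas : Measurable h) (hbound : ∀ s, |h s| ≤ M) (z : ℝ) :
    (∫ s in Set.Ici a, Real.sqrt ε / (Real.sqrt (4 * π) * s ^ 2) *
        Real.exp (-(z ^ 2 * s ^ 2) / (4 * ε)) * h s) ^ 2
      ≤ M ^ 2 / (4 * π) * ε * a⁻¹ *
        ∫ s in Set.Ici a, s⁻¹ ^ 2 * Real.exp (-(z ^ 2 * s ^ 2) / (2 * ε)) := by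
  have hpi := Real.pi_pos
  have h4π : (0:ℝ) < Real.sqrt (4 * π) := Real.sqrt_pos.2 (by positivity)
  set C : ℝ := Real.sqrt ε / Real.sqrt (4 * π) * M with hC
  have hCpos : 0 < C := by positivity
  have hsq : ∀ s : ℝ, s⁻¹ * (s⁻¹ * Real.exp (-(z ^ 2 * s ^ 2) / (4 * ε)))
      = s⁻¹ ^ 2 * Real.exp (-(z ^ 2 * s ^ 2) / (4 * ε)) := fun s => by ring
  have hint4 : IntegrableOn (fun s : ℝ => s⁻¹ * (s⁻¹ * Real.exp (-(z ^ 2 * s ^ 2) / (4 * ε))))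
      (Set.Ici a) := by
    refine ((int_inv_sq_exp ha hε (4 * ε) (by positivity)).congr_fun (fun s _ => (hsq s).symm) measurableSet_Ici)
  -- Step 1 : bound |∫ F|
  have step1 : ‖∫ s in Set.Ici a, Real.sqrt ε / (Real.sqrt (4 * π) * s ^ 2) *
        Real.exp (-(z ^ 2 * s ^ 2) / (4 * ε)) * h s‖
      ≤ ∫ s in Set.Ici a, C * (s⁻¹ * (s⁻¹ * Real.exp (-(z ^ 2 * s ^ 2) / (4 * ε)))) := by
    refine norm_integral_le_of_norm_le (hint4.const_mul C) ?_
    rw [ae_restrict_iff' measurableSet_Ici]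
    refine Filter.Eventually.of_forall fun s hs => ?_
    have hs0 : 0 < s := lt_of_lt_of_le ha hs
    have hA : (0:ℝ) ≤ Real.sqrt ε / (Real.sqrt (4 * π) * s ^ 2) := by positivity
    rw [Real.norm_eq_abs, abs_mul, abs_mul, abs_of_nonneg hA, abs_of_nonneg (Real.exp_nonneg _)]
    calc Real.sqrt ε / (Real.sqrt (4 * π) * s ^ 2) * Real.exp (-(z ^ 2 * s ^ 2) / (4 * ε)) * |h s|
        ≤ Real.sqrt ε / (Real.sqrt (4 * π) * s ^ 2) * Real.exp (-(z ^ 2 * s ^ 2) / (4 * ε)) * M :=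
          mul_le_mul_of_nonneg_left (hbound s) (by positivity)
      _ = C * (s⁻¹ * (s⁻¹ * Real.exp (-(z ^ 2 * s ^ 2) / (4 * ε)))) := by
          rw [hC]; field_simp
  -- Step 2 : Cauchy-Schwarz
  have hgsq : ∀ s : ℝ, (s⁻¹ * Real.exp (-(z ^ 2 * s ^ 2) / (4 * ε))) ^ 2
      = s⁻¹ ^ 2 * Real.exp (-(z ^ 2 * s ^ 2) / (2 * ε)) := fun s => by
    rw [mul_pow, sq (Real.exp _), ← Real.exp_add]
    congr 1
    field_simp
    ring
  have cs : (∫ s in Set.Ici a, s⁻¹ * (s⁻¹ * Real.exp (-(z ^ 2 * s ^ 2) / (4 * ε)))) ^ 2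
      ≤ a⁻¹ * ∫ s in Set.Ici a, s⁻¹ ^ 2 * Real.exp (-(z ^ 2 * s ^ 2) / (2 * ε)) := by
    have := my_cs (μ := volume.restrict (Set.Ici a))
      (f := fun s : ℝ => s⁻¹) (g := fun s : ℝ => s⁻¹ * Real.exp (-(z ^ 2 * s ^ 2) / (4 * ε)))
      ((ae_restrict_iff' measurableSet_Ici).2 (Filter.Eventually.of_forall fun s hs =>
        inv_nonneg.2 (ha.le.trans hs)))
      ((ae_restrict_iff' measurableSet_Ici).2 (Filter.Eventually.of_forall fun s hs =>
        mul_nonneg (inv_nonneg.2 (ha.le.trans hs)) (Real.exp_nonneg _)))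
      measurable_inv.aestronglyMeasurable
      ((measurable_inv.mul (by measurability)).aestronglyMeasurable)
      (int_inv_sq ha)
      (by
        refine (int_inv_sq_exp ha hε (2 * ε) (by positivity)).congr_fun
          (fun s _ => (hgsq s).symm) measurableSet_Ici)
    calc (∫ s in Set.Ici a, s⁻¹ * (s⁻¹ * Real.exp (-(z ^ 2 * s ^ 2) / (4 * ε)))) ^ 2
        ≤ (∫ s in Set.Ici a, s⁻¹ ^ 2) *
            ∫ s in Set.Ici a, (s⁻¹ * Real.exp (-(z ^ 2 * s ^ 2) / (4 * ε))) ^ 2 := this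
      _ = a⁻¹ * ∫ s in Set.Ici a, s⁻¹ ^ 2 * Real.exp (-(z ^ 2 * s ^ 2) / (2 * ε)) := by
          rw [val_inv_sq ha]
          congr 1
          exact setIntegral_congr_fun measurableSet_Ici fun s _ => hgsq s
  -- combine
  have hInn : 0 ≤ ∫ s in Set.Ici a, s⁻¹ * (s⁻¹ * Real.exp (-(z ^ 2 * s ^ 2) / (4 * ε))) := by
    refine setIntegral_nonneg measurableSet_Ici fun s hs => ?_
    have : (0:ℝ) ≤ s⁻¹ := inv_nonneg.2 (ha.le.trans hs)
    positivity
  calc (∫ s in Set.Ici a, Real.sqrt ε / (Real.sqrt (4 * π) * s ^ 2) *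
        Real.exp (-(z ^ 2 * s ^ 2) / (4 * ε)) * h s) ^ 2
      = ‖∫ s in Set.Ici a, Real.sqrt ε / (Real.sqrt (4 * π) * s ^ 2) *
          Real.exp (-(z ^ 2 * s ^ 2) / (4 * ε)) * h s‖ ^ 2 := by
        rw [Real.norm_eq_abs, sq_abs]
    _ ≤ (∫ s in Set.Ici a, C * (s⁻¹ * (s⁻¹ * Real.exp (-(z ^ 2 * s ^ 2) / (4 * ε))))) ^ 2 :=
        pow_le_pow_left₀ (norm_nonneg _) step1 2
    _ = C ^ 2 * (∫ s in Set.Ici a, s⁻¹ * (s⁻¹ * Real.exp (-(z ^ 2 * s ^ 2) / (4 * ε)))) ^ 2 := by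
        rw [integral_const_mul, mul_pow]
    _ ≤ C ^ 2 * (a⁻¹ * ∫ s in Set.Ici a, s⁻¹ ^ 2 * Real.exp (-(z ^ 2 * s ^ 2) / (2 * ε))) :=
        mul_le_mul_of_nonneg_left cs (sq_nonneg _)
    _ = M ^ 2 / (4 * π) * ε * a⁻¹ *
          ∫ s in Set.Ici a, s⁻¹ ^ 2 * Real.exp (-(z ^ 2 * s ^ 2) / (2 * ε)) := by
        have : C ^ 2 = M ^ 2 / (4 * π) * ε := by
          rw [hC, mul_pow, div_pow, Real.sq_sqrt hε.le, Real.sq_sqrt (by positivity : (0:ℝ) ≤ 4 * π)]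
          ring
        rw [this]; ring

theorem I2_estimate (t M : ℝ) (ht : 0 < t) (hM : 0 < M) :
    ∃ k k' K : ℝ, 0 < k ∧ 0 < k' ∧ 0 < K ∧ ∀ ε : ℝ, 0 < ε →
      ∀ h : ℝ → ℝ, Measurable h → (∀ s, |h s| ≤ M) →
      (∫ z in (0:ℝ)..1, (∫ s in Set.Ici (1 / Real.sqrt t),
            Real.sqrt ε / (Real.sqrt (4 * π) * s ^ 2) *
              Real.exp (-(z ^ 2 * s ^ 2) / (4 * ε)) * h s) ^ 2)
          ≤ k * ε * Real.sqrt t * ∫ s in Set.Ici (1 / Real.sqrt t),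
              s⁻¹ ^ 2 * ∫ z in (0:ℝ)..1, Real.exp (-(z ^ 2 * s ^ 2) / (2 * ε)) ∧
      k * ε * Real.sqrt t * (∫ s in Set.Ici (1 / Real.sqrt t),
              s⁻¹ ^ 2 * ∫ z in (0:ℝ)..1, Real.exp (-(z ^ 2 * s ^ 2) / (2 * ε)))
          ≤ k' * ε ^ ((3:ℝ)/2) ∧
      Real.sqrt (∫ z in (0:ℝ)..1, (∫ s in Set.Ici (1 / Real.sqrt t),
            Real.sqrt ε / (Real.sqrt (4 * π) * s ^ 2) *
              Real.exp (-(z ^ 2 * s ^ 2) / (4 * ε)) * h s) ^ 2)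
          ≤ K * ε ^ ((3:ℝ)/4) := by
  have hpi := Real.pi_pos
  have hst : 0 < Real.sqrt t := Real.sqrt_pos.2 ht
  have ha : 0 < 1 / Real.sqrt t := by positivity
  set a : ℝ := 1 / Real.sqrt t with ha_def
  have hainv : a⁻¹ = Real.sqrt t := by rw [ha_def, one_div, inv_inv]
  set k : ℝ := M ^ 2 / (4 * π) with hk_def
  set k' : ℝ := k * Real.sqrt (2 * π) * t * Real.sqrt t / 4 with hk'_def
  have hkpos : 0 < k := by positivity
  have h2π : 0 < Real.sqrt (2 * π) := Real.sqrt_pos.2 (by positivity)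
  have hk'pos : 0 < k' := by positivity
  refine ⟨k, k', Real.sqrt k', hkpos, hk'pos, Real.sqrt_pos.2 hk'pos, ?_⟩
  intro ε hε h hmeas hbound
  set G : ℝ → ℝ := fun z => ∫ s in Set.Ici a, Real.sqrt ε / (Real.sqrt (4 * π) * s ^ 2) *
      Real.exp (-(z ^ 2 * s ^ 2) / (4 * ε)) * h s with hG_def
  set H : ℝ → ℝ := fun z => ∫ s in Set.Ici a, s⁻¹ ^ 2 *
      Real.exp (-(z ^ 2 * s ^ 2) / (2 * ε)) with hH_def
  set J : ℝ := ∫ s in Set.Ici a, s⁻¹ ^ 2 *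
      ∫ z in (0:ℝ)..1, Real.exp (-(z ^ 2 * s ^ 2) / (2 * ε)) with hJ_def
  have key : ∀ z : ℝ, G z ^ 2 ≤ k * ε * Real.sqrt t * H z := fun z => by
    have := key_pointwise ha hε hM hmeas hbound z
    rwa [hainv] at this
  have hH_nonneg : ∀ z, 0 ≤ H z := fun z => integral_nonneg fun s => by positivity
  have hH_le : ∀ z, H z ≤ Real.sqrt t := fun z => by
    rw [hH_def]
    calc (∫ s in Set.Ici a, s⁻¹ ^ 2 * Real.exp (-(z ^ 2 * s ^ 2) / (2 * ε)))
        ≤ ∫ s in Set.Ici a, s⁻¹ ^ 2 := by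
          refine setIntegral_mono_on (int_inv_sq_exp ha hε (2 * ε) (by positivity))
            (int_inv_sq ha) measurableSet_Ici fun s _ => ?_
          calc s⁻¹ ^ 2 * Real.exp (-(z ^ 2 * s ^ 2) / (2 * ε)) ≤ s⁻¹ ^ 2 * 1 :=
                mul_le_mul_of_nonneg_left (exp_term_le_one (by positivity)) (by positivity)
            _ = s⁻¹ ^ 2 := mul_one _
      _ = Real.sqrt t := by rw [val_inv_sq ha, hainv]
  -- measurability
  have hFmeas : Measurable (fun p : ℝ × ℝ => Real.sqrt ε / (Real.sqrt (4 * π) * p.2 ^ 2) *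
      Real.exp (-(p.1 ^ 2 * p.2 ^ 2) / (4 * ε)) * h p.2) := by
    refine Measurable.mul (Measurable.mul ?_ ?_) (hmeas.comp measurable_snd)
    · exact measurable_const.div ((measurable_snd.pow_const 2).const_mul _)
    · exact (((measurable_fst.pow_const 2).mul (measurable_snd.pow_const 2)).neg.div_const _).exp
  have hGmeas : StronglyMeasurable G := hFmeas.stronglyMeasurable.integral_prod_right'
  have hf2meas : Measurable (fun p : ℝ × ℝ => (p.2)⁻¹ ^ 2 *
      Real.exp (-(p.1 ^ 2 * p.2 ^ 2) / (2 * ε))) := by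
    refine Measurable.mul (measurable_snd.inv.pow_const 2) ?_
    exact (((measurable_fst.pow_const 2).mul (measurable_snd.pow_const 2)).neg.div_const _).exp
  have hHmeas : StronglyMeasurable H := hf2meas.stronglyMeasurable.integral_prod_right'
  -- interval integrability
  have hG2int : IntervalIntegrable (fun z => G z ^ 2) volume 0 1 := by
    rw [intervalIntegrable_iff_integrableOn_Ioc_of_le zero_le_one]
    refine Integrable.mono' (integrable_const (k * ε * Real.sqrt t * Real.sqrt t))
      (hGmeas.pow 2).aestronglyMeasurable.restrict (Filter.Eventually.of_forall fun z => ?_)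
    rw [Real.norm_eq_abs, abs_of_nonneg (sq_nonneg _)]
    calc G z ^ 2 ≤ k * ε * Real.sqrt t * H z := key z
      _ ≤ k * ε * Real.sqrt t * Real.sqrt t :=
        mul_le_mul_of_nonneg_left (hH_le z) (by positivity)
  have hHint : IntervalIntegrable (fun z => k * ε * Real.sqrt t * H z) volume 0 1 := by
    rw [intervalIntegrable_iff_integrableOn_Ioc_of_le zero_le_one]
    refine Integrable.mono' (integrable_const (k * ε * Real.sqrt t * Real.sqrt t))
      (hHmeas.const_mul _).aestronglyMeasurable.restrict (Filter.Eventually.of_forall fun z => ?_)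
    rw [Real.norm_eq_abs, abs_of_nonneg (mul_nonneg (by positivity) (hH_nonneg z))]
    exact mul_le_mul_of_nonneg_left (hH_le z) (by positivity)
  -- Fubini
  have hprod : Integrable (fun p : ℝ × ℝ => (p.2)⁻¹ ^ 2 *
      Real.exp (-(p.1 ^ 2 * p.2 ^ 2) / (2 * ε)))
      ((volume.restrict (Set.Ioc (0:ℝ) 1)).prod (volume.restrict (Set.Ici a))) := by
    rw [integrable_prod_iff hf2meas.aestronglyMeasurable]
    constructor
    · exact Filter.Eventually.of_forall fun z => int_inv_sq_exp ha hε (2 * ε) (by positivity)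
    · refine Integrable.mono' (integrable_const (Real.sqrt t))
        hf2meas.norm.stronglyMeasurable.integral_prod_right'.aestronglyMeasurable
        (Filter.Eventually.of_forall fun z => ?_)
      have heq : (∫ s in Set.Ici a, ‖s⁻¹ ^ 2 * Real.exp (-(z ^ 2 * s ^ 2) / (2 * ε))‖) = H z := by
        rw [hH_def]
        exact integral_congr_ae (Filter.Eventually.of_forall fun s => by
          dsimp only; rw [Real.norm_eq_abs, abs_of_nonneg (by positivity)])
      show ‖∫ s in Set.Ici a, ‖s⁻¹ ^ 2 * Real.exp (-(z ^ 2 * s ^ 2) / (2 * ε))‖‖ ≤ Real.sqrt t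
      rw [heq, Real.norm_eq_abs, abs_of_nonneg (hH_nonneg z)]
      exact hH_le z
  have swap : (∫ z in Set.Ioc (0:ℝ) 1, H z) = J := by
    rw [hH_def, hJ_def]
    rw [MeasureTheory.integral_integral_swap
      (f := fun z s => s⁻¹ ^ 2 * Real.exp (-(z ^ 2 * s ^ 2) / (2 * ε))) hprod]
    refine setIntegral_congr_fun measurableSet_Ici fun s _ => ?_
    rw [MeasureTheory.integral_const_mul, intervalIntegral.integral_of_le zero_le_one]
  -- goal 1
  have goal1 : (∫ z in (0:ℝ)..1, G z ^ 2) ≤ k * ε * Real.sqrt t * J := by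
    calc (∫ z in (0:ℝ)..1, G z ^ 2) ≤ ∫ z in (0:ℝ)..1, k * ε * Real.sqrt t * H z :=
        intervalIntegral.integral_mono_on zero_le_one hG2int hHint fun z _ => key z
      _ = k * ε * Real.sqrt t * ∫ z in (0:ℝ)..1, H z :=
        intervalIntegral.integral_const_mul _ _
      _ = k * ε * Real.sqrt t * J := by
        rw [intervalIntegral.integral_of_le zero_le_one, swap]
  -- goal 2
  have hinner_nonneg : ∀ s : ℝ, 0 ≤ ∫ z in (0:ℝ)..1, Real.exp (-(z ^ 2 * s ^ 2) / (2 * ε)) :=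
    fun s => intervalIntegral.integral_nonneg zero_le_one fun z _ => Real.exp_nonneg _
  have hinner_le_one : ∀ s : ℝ, (∫ z in (0:ℝ)..1, Real.exp (-(z ^ 2 * s ^ 2) / (2 * ε))) ≤ 1 :=
    fun s => by
    have hcont : Continuous fun z : ℝ => Real.exp (-(z ^ 2 * s ^ 2) / (2 * ε)) :=
      Real.continuous_exp.comp (((continuous_pow 2).mul continuous_const).neg.div_const _)
    calc (∫ z in (0:ℝ)..1, Real.exp (-(z ^ 2 * s ^ 2) / (2 * ε)))
        ≤ ∫ _ in (0:ℝ)..1, (1:ℝ) :=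
          intervalIntegral.integral_mono_on zero_le_one (hcont.intervalIntegrable 0 1)
            intervalIntegrable_const fun z _ => exp_term_le_one (by positivity)
      _ = 1 := by simp
  have hinner_meas : StronglyMeasurable
      (fun s : ℝ => ∫ z in (0:ℝ)..1, Real.exp (-(z ^ 2 * s ^ 2) / (2 * ε))) := by
    have hm : Measurable (fun p : ℝ × ℝ => Real.exp (-(p.2 ^ 2 * p.1 ^ 2) / (2 * ε))) :=
      (((measurable_snd.pow_const 2).mul (measurable_fst.pow_const 2)).neg.div_const _).exp
    have := hm.stronglyMeasurable.integral_prod_right'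
      (ν := volume.restrict (Set.Ioc (0:ℝ) 1))
    have heq : (fun s : ℝ => ∫ z in (0:ℝ)..1, Real.exp (-(z ^ 2 * s ^ 2) / (2 * ε)))
        = fun s : ℝ => ∫ z in Set.Ioc (0:ℝ) 1, Real.exp (-(z ^ 2 * s ^ 2) / (2 * ε)) :=
      funext fun s => intervalIntegral.integral_of_le zero_le_one
    rw [heq]
    exact this
  have hJint : IntegrableOn (fun s : ℝ => s⁻¹ ^ 2 *
      ∫ z in (0:ℝ)..1, Real.exp (-(z ^ 2 * s ^ 2) / (2 * ε))) (Set.Ici a) := by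
    refine (int_inv_sq ha).mono'
      (((measurable_inv.pow_const 2).stronglyMeasurable.mul hinner_meas).aestronglyMeasurable.restrict)
      (Filter.Eventually.of_forall fun s => ?_)
    rw [Real.norm_eq_abs, abs_of_nonneg (mul_nonneg (by positivity) (hinner_nonneg s))]
    calc s⁻¹ ^ 2 * (∫ z in (0:ℝ)..1, Real.exp (-(z ^ 2 * s ^ 2) / (2 * ε)))
        ≤ s⁻¹ ^ 2 * 1 := mul_le_mul_of_nonneg_left (hinner_le_one s) (by positivity)
      _ = s⁻¹ ^ 2 := mul_one _
  have hJle : J ≤ Real.sqrt (2 * π * ε) / 2 * (t / 2) := by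
    rw [hJ_def]
    calc (∫ s in Set.Ici a, s⁻¹ ^ 2 * ∫ z in (0:ℝ)..1, Real.exp (-(z ^ 2 * s ^ 2) / (2 * ε)))
        ≤ ∫ s in Set.Ici a, Real.sqrt (2 * π * ε) / 2 * s⁻¹ ^ 3 := by
          refine setIntegral_mono_on hJint ((int_inv_cube ha).const_mul _)
            measurableSet_Ici fun s hs => ?_
          have hs0 : 0 < s := ha.trans_le hs
          calc s⁻¹ ^ 2 * (∫ z in (0:ℝ)..1, Real.exp (-(z ^ 2 * s ^ 2) / (2 * ε)))
              ≤ s⁻¹ ^ 2 * (Real.sqrt (2 * π * ε) / (2 * s)) :=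
                mul_le_mul_of_nonneg_left (inner_z_bound hε hs0) (by positivity)
            _ = Real.sqrt (2 * π * ε) / 2 * s⁻¹ ^ 3 := by
                field_simp
      _ = Real.sqrt (2 * π * ε) / 2 * (t / 2) := by
          rw [MeasureTheory.integral_const_mul, val_inv_cube ha, hainv,
            Real.sq_sqrt ht.le]
  have goal2 : k * ε * Real.sqrt t * J ≤ k' * ε ^ ((3:ℝ)/2) := by
    calc k * ε * Real.sqrt t * J
        ≤ k * ε * Real.sqrt t * (Real.sqrt (2 * π * ε) / 2 * (t / 2)) :=
          mul_le_mul_of_nonneg_left hJle (by positivity)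
      _ = k' * ε ^ ((3:ℝ)/2) := by
          rw [hk'_def, show ε ^ ((3:ℝ)/2) = ε * Real.sqrt ε from by
              rw [show (3:ℝ)/2 = 1 + 1/2 by norm_num, Real.rpow_add hε, Real.rpow_one,
                Real.sqrt_eq_rpow],
            Real.sqrt_mul (by positivity : (0:ℝ) ≤ 2 * π) ε]
          ring
  have goal3 : Real.sqrt (∫ z in (0:ℝ)..1, G z ^ 2) ≤ Real.sqrt k' * ε ^ ((3:ℝ)/4) := by
    calc Real.sqrt (∫ z in (0:ℝ)..1, G z ^ 2) ≤ Real.sqrt (k' * ε ^ ((3:ℝ)/2)) :=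
        Real.sqrt_le_sqrt (goal1.trans goal2)
      _ = Real.sqrt k' * ε ^ ((3:ℝ)/4) := by
        rw [Real.sqrt_mul hk'pos.le, show Real.sqrt (ε ^ ((3:ℝ)/2)) = ε ^ ((3:ℝ)/4) from by
          rw [Real.sqrt_eq_rpow, ← Real.rpow_mul hε.le]; norm_num]
  exact ⟨goal1, goal2, goal3⟩
end
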